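/- With the notation of the previous statement, suppose additionally that B_rd,mod and B_mod,rd are perfect pairings of finite-dimensional spaces, with dim V_rd = dim W_mod and dim V_mod = dim W_rd, and the compatibility B_rd,mod(x, b(y)) = B_mod,rd(a(x), y) holds. Then the induced middle pairing B_mid : image(a) ⊗ image(b) → K is non-degenerate. -/
import Mathlib


/-!
Statement 3 (non-degeneracy of the middle pairing, Corollary 2.11 of the paper):
if moreover `B₁`, `B₂` are perfect pairings of finite-dimensional spaces with
`dim V_rd = dim W_mod` and `dim V_mod = dim W_rd`, then the induced middle
pairing `B_mid : image a ⊗ image b → K` is non-degenerate.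
-/

theorem middle_pairing_nondegenerate
    (K : Type*) [Field K]
    (Vrd Vmod Wrd Wmod : Type*)
    [AddCommGroup Vrd] [Module K Vrd] [AddCommGroup Vmod] [Module K Vmod]
    [AddCommGroup Wrd] [Module K Wrd] [AddCommGroup Wmod] [Module K Wmod]
    [FiniteDimensional K Vrd] [FiniteDimensional K Vmod]
    [FiniteDimensional K Wrd] [FiniteDimensional K Wmod]
    (hdim₁ : Module.finrank K Vrd = Module.finrank K Wmod)
    (hdim₂ : Module.finrank K Vmod = Module.finrank K Wrd)
    (a : Vrd →ₗ[K] Vmod) (b : Wrd →ₗ[K] Wmod)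
    (B₁ : Vrd →ₗ[K] Wmod →ₗ[K] K) (B₂ : Vmod →ₗ[K] Wrd →ₗ[K] K)
    -- `B₁` and `B₂` are perfect
    (hB₁perf : Function.Bijective (B₁ : Vrd → Wmod →ₗ[K] K))
    (hB₂perf : Function.Bijective (B₂ : Vmod → Wrd →ₗ[K] K))
    (hcompat : ∀ (x : Vrd) (y : Wrd), B₁ x (b y) = B₂ (a x) y)
    -- the induced middle pairing
    (Bmid : LinearMap.range a →ₗ[K] LinearMap.range b →ₗ[K] K)
    (hBmid : ∀ (x : Vrd) (y : Wrd),
      Bmid ⟨a x, LinearMap.mem_range_self a x⟩ ⟨b y, LinearMap.mem_range_self b y⟩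
        = B₁ x (b y)) :
    (∀ u : LinearMap.range a, (∀ v : LinearMap.range b, Bmid u v = 0) → u = 0) ∧
    (∀ v : LinearMap.range b, (∀ u : LinearMap.range a, Bmid u v = 0) → v = 0) := by
  constructor
  · rintro ⟨_, x, rfl⟩ h
    have hzero : B₂ (a x) = 0 := by
      ext y
      have := h ⟨b y, LinearMap.mem_range_self b y⟩
      rw [hBmid x y, hcompat x y] at this
      simpa using this
    have : a x = 0 := hB₂perf.1 (by simpa using hzero)
    exact Subtype.ext this
  · rintro ⟨_, y, rfl⟩ h
    have hby : b y = 0 := by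
      rw [← Module.forall_dual_apply_eq_zero_iff K]
      intro φ
      obtain ⟨x, rfl⟩ := hB₁perf.2 φ
      have := h ⟨a x, LinearMap.mem_range_self a x⟩
      rwa [hBmid x y] at this
    exact Subtype.ext hby
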